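/- Let n ≥ 1, N_g ≥ 2, and let A be an orthogonal array OA(n, N_g). In the D³ node-level placement, the k'-th block of group j of the i-th stripe (for the n² stripes i ∈ Fin (n²) of a stripe region) is stored on node (A i j + k') mod n of rack j. Then for every rack j ∈ Fin N_g, every position offset c ∈ Fin n, and every node y ∈ Fin n, exactly n of the n² stripes place their block of position (j, c) on node y; formally, the cardinality of {i ∈ Fin (n²) : A i j + c = y} (addition in ZMod n) equals n. Hence, within a cluster of n² stripes, each node of a rack stores the same number of data/parity blocks of each position type. -/

import Mathlib

/-- An orthogonal array OA(n, k): a function `A : Fin (n²) → Fin k → Fin n` such that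
for any two distinct columns the induced pair map is bijective. -/
def IsOA (n k : ℕ) (A : Fin (n ^ 2) → Fin k → Fin n) : Prop :=
  ∀ j₁ j₂ : Fin k, j₁ ≠ j₂ → Function.Bijective (fun i => (A i j₁, A i j₂))

/-- Lemma 3: in the D³ node-level placement defined by an OA(n, N_g), for every
rack `j`, position offset `c` and node `y`, exactly `n` of the `n²` stripes of a
stripe region place the corresponding block on node `y` of rack `j`
(node indices are computed additively in `ZMod n`). -/
theorem d3_node_level_balance (n Ng : ℕ) (hn : 1 ≤ n) (hNg : 2 ≤ Ng)
    (A : Fin (n ^ 2) → Fin Ng → Fin n) (hA : IsOA n Ng A)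
    (j : Fin Ng) (c : Fin n) (y : Fin n) :
    (Finset.univ.filter (fun i : Fin (n ^ 2) =>
        ((A i j : ℕ) : ZMod n) + ((c : ℕ) : ZMod n) = ((y : ℕ) : ZMod n))).card
      = n := by
  haveI : NeZero n := ⟨by omega⟩
  -- the target value in Fin n
  set v : ZMod n := ((y : ℕ) : ZMod n) - ((c : ℕ) : ZMod n) with hv
  set t : Fin n := ⟨v.val, ZMod.val_lt v⟩ with ht
  have htv : ((t : ℕ) : ZMod n) = v := ZMod.natCast_rightInverse v
  -- rewrite condition as A i j = t
  have hcond : ∀ i, (((A i j : ℕ) : ZMod n) + ((c : ℕ) : ZMod n) = ((y : ℕ) : ZMod n))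
      ↔ A i j = t := by
    intro i
    constructor
    · intro h
      have h' : ((A i j : ℕ) : ZMod n) = ((t : ℕ) : ZMod n) := by
        rw [htv, hv]; linear_combination h
      have := congrArg ZMod.val h'
      rw [ZMod.val_cast_of_lt (A i j).isLt, ZMod.val_cast_of_lt t.isLt] at this
      exact Fin.val_inj.mp this
    · intro h
      rw [h, htv, hv]; ring
  -- pick a second column
  obtain ⟨j₂, hj₂⟩ : ∃ j₂ : Fin Ng, j₂ ≠ j := by
    have h1 : 1 < Fintype.card (Fin Ng) := by rw [Fintype.card_fin]; omega
    exact Fintype.exists_ne_of_one_lt_card h1 j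
  have hbij := hA j j₂ (Ne.symm hj₂)
  -- count via the bijection
  have hcard : (Finset.univ.filter (fun i : Fin (n ^ 2) => A i j = t)).card
      = (Finset.univ.filter (fun p : Fin n × Fin n => p.1 = t)).card := by
    apply Finset.card_bij (fun i _ => (A i j, A i j₂))
    · intro i hi
      simp only [Finset.mem_filter, Finset.mem_univ, true_and] at hi ⊢
      exact hi
    · intro i₁ h₁ i₂ h₂ h
      exact hbij.injective h
    · intro p hp
      obtain ⟨i, hi⟩ := hbij.surjective p
      refine ⟨i, ?_, hi⟩
      simp only [Finset.mem_filter, Finset.mem_univ, true_and] at hp ⊢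
      rw [← hp]; exact congrArg Prod.fst hi ▸ rfl
    
  have hpairs : (Finset.univ.filter (fun p : Fin n × Fin n => p.1 = t)).card = n := by
    have : (Finset.univ.filter (fun p : Fin n × Fin n => p.1 = t))
        = {t} ×ˢ Finset.univ := by
      ext ⟨a, b⟩
      simp [Finset.mem_product, eq_comm]
    rw [this, Finset.card_product]
    simp
  have hfe : (Finset.univ.filter (fun i : Fin (n ^ 2) =>
        ((A i j : ℕ) : ZMod n) + ((c : ℕ) : ZMod n) = ((y : ℕ) : ZMod n)))
      = Finset.univ.filter (fun i : Fin (n ^ 2) => A i j = t) := by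
    ext i
    simp [hcond]
  rw [hfe]
  exact hcard.trans hpairs
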